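/- Let u(x,t) = g(x+1,t) + g(x−1,t) for x ≥ 0, t > 0, where g is the one-dimensional heat kernel. Then ∂_xx ln(u(x,t)) = −1/(2t) + (1/t²)·e^{−x/t}/(1 + e^{−x/t})². In particular ∂_xx ln(u(x,t)) > −1/(2t), and ∂_xx ln(u(x,t)) → −1/(2t) as x → +∞. -/

import Mathlib

open Real Filter

/-- The one-dimensional heat kernel. -/
noncomputable def heatKernel (z t : ℝ) : ℝ :=
  (4 * Real.pi * t) ^ (-(1/2) : ℝ) * Real.exp (-z ^ 2 / (4 * t))

/-- Example 1: solution on a three-edge star graph with symmetric Dirac data. -/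
noncomputable def uEx1 (x t : ℝ) : ℝ := heatKernel (x + 1) t + heatKernel (x - 1) t

lemma uEx1_factor (t : ℝ) (ht : 0 < t) (z : ℝ) :
    uEx1 z t = (4 * Real.pi * t) ^ (-(1/2) : ℝ) * Real.exp (-(z+1)^2 / (4*t))
      * (1 + Real.exp (z/t)) := by
  have h : Real.exp (-(z-1)^2 / (4*t)) = Real.exp (-(z+1)^2 / (4*t)) * Real.exp (z/t) := by
    rw [← Real.exp_add]
    congr 1
    field_simp
    ring
  simp only [uEx1, heatKernel, h]
  ring

lemma log_uEx1 (t : ℝ) (ht : 0 < t) (z : ℝ) :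
    Real.log (uEx1 z t) = Real.log ((4 * Real.pi * t) ^ (-(1/2) : ℝ))
      + (-(z+1)^2 / (4*t)) + Real.log (1 + Real.exp (z/t)) := by
  have hc : (0:ℝ) < (4 * Real.pi * t) ^ (-(1/2) : ℝ) :=
    Real.rpow_pos_of_pos (by positivity) _
  rw [uEx1_factor t ht z, Real.log_mul (by positivity) (by positivity),
    Real.log_mul (by positivity) (by positivity), Real.log_exp]

lemma deriv_log_uEx1 (t : ℝ) (ht : 0 < t) :
    deriv (fun z => Real.log (uEx1 z t))
      = fun x => -(x+1)/(2*t) + Real.exp (x/t) / (t * (1 + Real.exp (x/t))) := by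
  have hfun : (fun z => Real.log (uEx1 z t))
      = fun z => Real.log ((4 * Real.pi * t) ^ (-(1/2) : ℝ))
        + (-(z+1)^2 / (4*t)) + Real.log (1 + Real.exp (z/t)) := by
    funext z; exact log_uEx1 t ht z
  funext x
  rw [hfun]
  have h1 : HasDerivAt (fun z : ℝ => z/t) (1/t) x := (hasDerivAt_id x).div_const t
  have h2 : HasDerivAt (fun z : ℝ => Real.exp (z/t)) (Real.exp (x/t) * (1/t)) x := h1.exp
  have h3 : HasDerivAt (fun z : ℝ => 1 + Real.exp (z/t)) (Real.exp (x/t) * (1/t)) x :=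
    h2.const_add 1
  have h4 : HasDerivAt (fun z : ℝ => Real.log (1 + Real.exp (z/t)))
      ((Real.exp (x/t) * (1/t)) / (1 + Real.exp (x/t))) x := h3.log (by positivity)
  have h5 : HasDerivAt (fun z : ℝ => -(z+1)^2 / (4*t))
      (-(2*(x+1)^1*1) / (4*t)) x := by
    exact ((((hasDerivAt_id x).add_const 1).pow 2).neg).div_const (4*t)
  have h6 := (((hasDerivAt_const x
      (Real.log ((4 * Real.pi * t) ^ (-(1/2) : ℝ)))).add h5).add h4)
  simp only [Pi.add_def] at h6
  rw [h6.deriv]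
  have ht' : t ≠ 0 := ne_of_gt ht
  have he : (1 + Real.exp (x/t)) ≠ 0 := by positivity
  field_simp
  ring

lemma deriv2_log_uEx1 (t : ℝ) (ht : 0 < t) (x : ℝ) :
    deriv (deriv (fun z => Real.log (uEx1 z t))) x
      = -(1 / (2 * t)) + 1 / t ^ 2 * (Real.exp (x / t) / (1 + Real.exp (x / t)) ^ 2) := by
  rw [deriv_log_uEx1 t ht]
  have ht' : t ≠ 0 := ne_of_gt ht
  have he : (1 + Real.exp (x/t)) ≠ 0 := by positivity
  have h1 : HasDerivAt (fun z : ℝ => z/t) (1/t) x := (hasDerivAt_id x).div_const t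
  have h2 : HasDerivAt (fun z : ℝ => Real.exp (z/t)) (Real.exp (x/t) * (1/t)) x := h1.exp
  have h3 : HasDerivAt (fun z : ℝ => t * (1 + Real.exp (z/t)))
      (t * (Real.exp (x/t) * (1/t))) x := (h2.const_add 1).const_mul t
  have h4 : HasDerivAt (fun z : ℝ => Real.exp (z/t) / (t * (1 + Real.exp (z/t))))
      ((Real.exp (x/t) * (1/t) * (t * (1 + Real.exp (x/t)))
        - Real.exp (x/t) * (t * (Real.exp (x/t) * (1/t)))) / (t * (1 + Real.exp (x/t)))^2)
      x := h2.div h3 (by positivity)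
  have h5 : HasDerivAt (fun z : ℝ => -(z+1)/(2*t)) (-1/(2*t)) x := by
    have := (((hasDerivAt_id x).add_const 1).neg).div_const (2*t)
    simpa using this
  have h6 := h5.add h4
  simp only [Pi.add_def] at h6
  rw [h6.deriv]
  field_simp
  ring

lemma exp_neg_ratio (t x : ℝ) (ht : t ≠ 0) :
    Real.exp (-x / t) / (1 + Real.exp (-x / t)) ^ 2
      = Real.exp (x / t) / (1 + Real.exp (x / t)) ^ 2 := by
  rw [neg_div, Real.exp_neg]
  have hE : (0:ℝ) < Real.exp (x/t) := Real.exp_pos _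
  field_simp
  ring

theorem example1_log_second_deriv (t : ℝ) (ht : 0 < t) :
    (∀ x : ℝ, 0 ≤ x →
      deriv (deriv (fun z => Real.log (uEx1 z t))) x
        = -(1 / (2 * t)) + 1 / t ^ 2 * (Real.exp (-x / t) / (1 + Real.exp (-x / t)) ^ 2)) ∧
    (∀ x : ℝ, 0 ≤ x →
      -(1 / (2 * t)) < deriv (deriv (fun z => Real.log (uEx1 z t))) x) ∧
    Tendsto (fun x => deriv (deriv (fun z => Real.log (uEx1 z t))) x) atTop
      (nhds (-(1 / (2 * t)))) := by
  have ht' : t ≠ 0 := ne_of_gt ht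
  have key : ∀ x : ℝ, deriv (deriv (fun z => Real.log (uEx1 z t))) x
      = -(1 / (2 * t)) + 1 / t ^ 2 * (Real.exp (-x / t) / (1 + Real.exp (-x / t)) ^ 2) := by
    intro x
    rw [deriv2_log_uEx1 t ht x, exp_neg_ratio t x ht']
  refine ⟨fun x _ => key x, fun x _ => ?_, ?_⟩
  · rw [key x]
    have : 0 < 1 / t ^ 2 * (Real.exp (-x / t) / (1 + Real.exp (-x / t)) ^ 2) := by positivity
    linarith
  · have hfun : (fun x => deriv (deriv (fun z => Real.log (uEx1 z t))) x)
        = fun x => -(1 / (2 * t)) + 1 / t ^ 2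
          * (Real.exp (-x / t) / (1 + Real.exp (-x / t)) ^ 2) := funext key
    rw [hfun]
    have h0 : Tendsto (fun x : ℝ => Real.exp (-x / t)) atTop (nhds 0) := by
      have h1 : Tendsto (fun x : ℝ => -x / t) atTop atBot := by
        simp only [neg_div]
        exact tendsto_neg_atBot_iff.mpr (tendsto_id.atTop_div_const ht)
      exact Real.tendsto_exp_atBot.comp h1
    have h2 : Tendsto (fun x : ℝ => Real.exp (-x / t) / (1 + Real.exp (-x / t)) ^ 2)
        atTop (nhds 0) := by
      have := h0.div (((h0.const_add 1).pow 2)) (by norm_num)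
      simpa [Pi.div_def] using this
    have := ((h2.const_mul (1 / t ^ 2)).const_add (-(1 / (2 * t))))
    simpa using this
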